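/- Let G be a graph containing a blossom subgraph B whose only terminals are c1 and c2, and let T be a spanning tree of G. If the edge set E(T) ∩ E(B) induces a tree (spanning all of B), then at most three of the five non-terminal vertices of B are leaves of T. -/

import Mathlib

/-- `T` is a spanning tree of `G`: a subgraph on all vertices that is a tree. -/
def IsSpanningTreeOf {V : Type*} (T G : SimpleGraph V) : Prop := T ≤ G ∧ T.IsTree

/-- The set of leaves (vertices of degree 1) of a graph. -/
def leafSet {V : Type*} (T : SimpleGraph V) : Set V := {v | (T.neighborSet v).ncard = 1}

/-- The blossom graph on 7 vertices: centre `b = 0` adjacent to `a1,a2,a3,a4 = 1,2,3,4`,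
edges `a1a2`, `a3a4`, terminal `c1 = 5` adjacent to `a1,a2`, terminal `c2 = 6`
adjacent to `a3,a4`. -/
def blossomGraph : SimpleGraph (Fin 7) :=
  SimpleGraph.fromRel (fun i j =>
    (i, j) ∈ ([(0,1),(0,2),(0,3),(0,4),(1,2),(3,4),(5,1),(5,2),(6,3),(6,4)] :
      List (Fin 7 × Fin 7)))

/-- The graph on the blossom's vertices whose edges are the blossom edges used by `T`
(i.e. the edge set `E(T) ∩ E(B)`). -/
def blossomInter {V : Type*} (T : SimpleGraph V) (f : Fin 7 ↪ V) : SimpleGraph (Fin 7) where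
  Adj i j := blossomGraph.Adj i j ∧ T.Adj (f i) (f j)
  symm := ⟨fun i j h => ⟨blossomGraph.adj_symm h.1, T.adj_symm h.2⟩⟩
  loopless := ⟨fun i h => blossomGraph.irrefl h.1⟩

/-! ### Auxiliary machinery -/

/-- The ten edges of the blossom graph, as an indexed family. -/
def E10 : Fin 10 → Fin 7 × Fin 7 :=
  ![(0,1),(0,2),(0,3),(0,4),(1,2),(3,4),(5,1),(5,2),(6,3),(6,4)]

/-- The degree of `v` in the subgraph selected by `p`. -/
def d (p : Fin 10 → Bool) (v : Fin 7) : ℕ :=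
  (Finset.univ.filter fun k => p k = true ∧ ((E10 k).1 = v ∨ (E10 k).2 = v)).card

/-- The endpoint of edge `k` other than `v`. -/
def otherEnd (k : Fin 10) (v : Fin 7) : Fin 7 :=
  if (E10 k).1 = v then (E10 k).2 else (E10 k).1

instance : DecidableRel blossomGraph.Adj := fun v w =>
  decidable_of_iff _ (SimpleGraph.fromRel_adj _ v w).symm

lemma helpA : ∀ (k : Fin 10) (v : Fin 7), ((E10 k).1 = v ∨ (E10 k).2 = v) →
    E10 k = (v, otherEnd k v) ∨ E10 k = (otherEnd k v, v) := by decide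

lemma helpB : ∀ (k l : Fin 10) (v : Fin 7),
    ((E10 k).1 = v ∨ (E10 k).2 = v) → ((E10 l).1 = v ∨ (E10 l).2 = v) →
    otherEnd k v = otherEnd l v → k = l := by decide

lemma helpC : ∀ (k : Fin 10) (v w : Fin 7), (E10 k = (v, w) ∨ E10 k = (w, v)) →
    ((E10 k).1 = v ∨ (E10 k).2 = v) ∧ otherEnd k v = w := by decide

lemma blossomE : ∀ v w : Fin 7, blossomGraph.Adj v w →
    ∃ k : Fin 10, E10 k = (v, w) ∨ E10 k = (w, v) := by decide

set_option maxHeartbeats 4000000 in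
set_option maxRecDepth 10000 in
lemma key : ∀ b0 b1 b2 b3 b4 b5 b6 b7 b8 b9 : Bool,
    (∑ v, d ![b0,b1,b2,b3,b4,b5,b6,b7,b8,b9] v) = 12 →
    0 < d ![b0,b1,b2,b3,b4,b5,b6,b7,b8,b9] 5 →
    0 < d ![b0,b1,b2,b3,b4,b5,b6,b7,b8,b9] 6 →
    (Finset.univ.filter fun i : Fin 7 =>
      i ≠ 5 ∧ i ≠ 6 ∧ d ![b0,b1,b2,b3,b4,b5,b6,b7,b8,b9] i = 1).card ≤ 3 := by
  decide

/-- If `G` contains a blossom subgraph `B` whose only terminals are `c1, c2`, `T` is a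
spanning tree of `G`, and `E(T) ∩ E(B)` induces a tree spanning all of `B`, then at
most three of the five non-terminal vertices of `B` are leaves of `T`. -/
theorem blossom_tree_form_leaves {V : Type*} [Fintype V] (G : SimpleGraph V)
    (f : Fin 7 ↪ V)
    (hemb : ∀ i j, blossomGraph.Adj i j → G.Adj (f i) (f j))
    (hterm : ∀ i : Fin 7, i ≠ 5 → i ≠ 6 →
      G.neighborSet (f i) = f '' blossomGraph.neighborSet i)
    (T : SimpleGraph V) (hT : IsSpanningTreeOf T G)
    (htree : (blossomInter T f).IsTree) :
    {i : Fin 7 | i ≠ 5 ∧ i ≠ 6 ∧ f i ∈ leafSet T}.ncard ≤ 3 := by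
  classical
  set H := blossomInter T f with hH
  letI : DecidableRel H.Adj := Classical.decRel _
  set p : Fin 10 → Bool := fun k => decide (H.Adj (E10 k).1 (E10 k).2) with hpdef
  have hp : ∀ k, p k = true ↔ H.Adj (E10 k).1 (E10 k).2 := fun k => by
    simp [hpdef]
  -- the selected-edge description of neighborhoods
  have himg : ∀ v : Fin 7,
      (Finset.univ.filter fun k => p k = true ∧ ((E10 k).1 = v ∨ (E10 k).2 = v)).image
        (fun k => otherEnd k v) = H.neighborFinset v := by
    intro v
    ext w
    simp only [Finset.mem_image, Finset.mem_filter, Finset.mem_univ, true_and,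
      SimpleGraph.mem_neighborFinset]
    constructor
    · rintro ⟨k, ⟨hk, hkv⟩, rfl⟩
      have hadj := (hp k).1 hk
      rcases helpA k v hkv with h | h
      · rw [h] at hadj; exact hadj
      · rw [h] at hadj; exact hadj.symm
    · intro hw
      have hb : blossomGraph.Adj v w := hw.1
      obtain ⟨k, hk⟩ := blossomE v w hb
      refine ⟨k, ⟨?_, (helpC k v w hk).1⟩, (helpC k v w hk).2⟩
      rw [hp k]
      rcases hk with h | h
      · rw [h]; exact hw
      · rw [h]; exact hw.symm
  have hdeg : ∀ v : Fin 7, d p v = H.degree v := by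
    intro v
    have hinj : Set.InjOn (fun k => otherEnd k v)
        ↑(Finset.univ.filter fun k => p k = true ∧ ((E10 k).1 = v ∨ (E10 k).2 = v)) := by
      intro k hk l hl h
      simp only [Finset.mem_coe, Finset.mem_filter] at hk hl
      exact helpB k l v hk.2.2 hl.2.2 h
    have hc := Finset.card_image_of_injOn hinj
    rw [himg v] at hc
    exact hc.symm
  have hncard : ∀ v : Fin 7, (H.neighborSet v).ncard = H.degree v := by
    intro v
    rw [Set.ncard_eq_toFinset_card', ← SimpleGraph.neighborFinset_def]
    rfl
  -- the sum of degrees is 12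
  have hedge : H.edgeFinset.card = 6 := by
    have := htree.card_edgeFinset
    simp only [Fintype.card_fin] at this
    omega
  have hsum : (∑ v, d p v) = 12 := by
    simp only [hdeg]
    rw [SimpleGraph.sum_degrees_eq_twice_card_edges, hedge]
  -- vertices 5 and 6 have positive degree
  have hpos : ∀ v : Fin 7, v ≠ 0 → 0 < d p v := by
    intro v hv
    rw [hdeg, SimpleGraph.degree_pos_iff_exists_adj]
    obtain ⟨w⟩ := htree.isConnected.preconnected v 0
    exact ⟨w.getVert 1, SimpleGraph.Walk.adj_snd (SimpleGraph.Walk.not_nil_of_ne hv)⟩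
  -- leaves of `T` among non-terminals are leaves of `H`
  have hleaf : ∀ i : Fin 7, i ≠ 5 → i ≠ 6 → f i ∈ leafSet T → d p i = 1 := by
    intro i h5 h6 hl
    have hnb : T.neighborSet (f i) = f '' H.neighborSet i := by
      ext w
      constructor
      · intro hw
        have hwG : w ∈ G.neighborSet (f i) := hT.1 hw
        rw [hterm i h5 h6] at hwG
        obtain ⟨j, hj, rfl⟩ := hwG
        exact ⟨j, ⟨hj, hw⟩, rfl⟩
      · rintro ⟨j, hj, rfl⟩
        exact hj.2
    have : (T.neighborSet (f i)).ncard = 1 := hl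
    rw [hnb, Set.ncard_image_of_injective _ f.injective, hncard] at this
    rw [hdeg]
    exact this
  -- assemble
  have hmat : ![p 0, p 1, p 2, p 3, p 4, p 5, p 6, p 7, p 8, p 9] = p := by
    funext k
    fin_cases k <;> rfl
  have hk := key (p 0) (p 1) (p 2) (p 3) (p 4) (p 5) (p 6) (p 7) (p 8) (p 9)
  rw [hmat] at hk
  have hcard := hk hsum (hpos 5 (by decide)) (hpos 6 (by decide))
  have hsub : {i : Fin 7 | i ≠ 5 ∧ i ≠ 6 ∧ f i ∈ leafSet T} ⊆
      ↑(Finset.univ.filter fun i : Fin 7 => i ≠ 5 ∧ i ≠ 6 ∧ d p i = 1) := by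
    rintro i ⟨h5, h6, hl⟩
    simp only [Finset.coe_filter, Finset.mem_univ, true_and, Set.mem_setOf_eq]
    exact ⟨h5, h6, hleaf i h5 h6 hl⟩
  calc {i : Fin 7 | i ≠ 5 ∧ i ≠ 6 ∧ f i ∈ leafSet T}.ncard
      ≤ (↑(Finset.univ.filter fun i : Fin 7 => i ≠ 5 ∧ i ≠ 6 ∧ d p i = 1) : Set (Fin 7)).ncard :=
        Set.ncard_le_ncard hsub (Set.toFinite _)
    _ = (Finset.univ.filter fun i : Fin 7 => i ≠ 5 ∧ i ≠ 6 ∧ d p i = 1).card :=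
        Set.ncard_coe_finset _
    _ ≤ 3 := hcard
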